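/- For every integer b and every β ∈ ℤ^ℓ, the element ∑_{k ∈ {0,…,r−1}^ℓ} ξ^{b(B(ρ+k,ρ+k) − B(ρ,ρ))/2 + B(ρ+k, β)} of ℤ[ξ] is divisible by (ξ−1)^{ℓ(r−1)/2} in ℤ[ξ]. -/

import Mathlib

/-- Cast an integer vector to a rational vector. -/
def intVecQ {l : ℕ} (x : Fin l → ℤ) : Fin l → ℚ := fun i => (x i : ℚ)

/-- Cast a vector of residues `k ∈ {0,…,r−1}^l` to a rational vector. -/
def finVecQ {l r : ℕ} (k : Fin l → Fin r) : Fin l → ℚ := fun i => ((k i : ℕ) : ℚ)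

/- ## Auxiliary machinery -/

lemma aux_sq_dvd_half {R : Type*} [CommRing R] [IsDomain R] (p : R) (hp0 : p ≠ 0)
    (hpr : ∀ a b : R, p ∣ a * b → p ∣ a ∨ p ∣ b) :
    ∀ (N : ℕ) (a b : R), (∀ n : ℕ, p ^ n ∣ a ↔ p ^ n ∣ b) → p ^ (2 * N) ∣ a * b → p ^ N ∣ a := by
  intro N
  induction N with
  | zero => intro a b _ _; simpa using one_dvd a
  | succ N ih =>
    intro a b hiff h2
    have hpab : p ∣ a * b := dvd_trans (dvd_pow_self p (by omega)) h2
    have hpa : p ∣ a := by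
      rcases hpr a b hpab with h | h
      · exact h
      · have := (hiff 1).2 (by simpa using h); simpa using this
    have hpb : p ∣ b := by have := (hiff 1).1 (by simpa using hpa); simpa using this
    obtain ⟨a', rfl⟩ := hpa
    obtain ⟨b', rfl⟩ := hpb
    have hcancel : p ^ (2 * N) ∣ a' * b' := by
      obtain ⟨c, hc⟩ := h2
      refine ⟨c, mul_left_cancel₀ (pow_ne_zero 2 hp0) ?_⟩
      have : p * a' * (p * b') = p ^ 2 * (a' * b') := by ring
      rw [this] at hc
      rw [hc]; ring
    have hiff' : ∀ n : ℕ, p ^ n ∣ a' ↔ p ^ n ∣ b' := by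
      intro n
      have h1 : p ^ n ∣ a' ↔ p ^ (n + 1) ∣ p * a' := by
        rw [pow_succ, mul_comm (p ^ n) p]
        exact (mul_dvd_mul_iff_left hp0).symm
      have h2' : p ^ n ∣ b' ↔ p ^ (n + 1) ∣ p * b' := by
        rw [pow_succ, mul_comm (p ^ n) p]
        exact (mul_dvd_mul_iff_left hp0).symm
      rw [h1, h2', hiff]
    have := ih a' b' hiff' hcancel
    rw [pow_succ, mul_comm (p ^ N) p]
    exact mul_dvd_mul_left p this

open Polynomial in
lemma aux_int_dvd {r : ℕ} (hrp : r.Prime) {ξ : ℂ} (hξ : IsPrimitiveRoot ξ r)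
    (n : ℤ) (c : ℂ) (hc : c ∈ Subring.closure ({ξ} : Set ℂ))
    (h : (n : ℂ) = (ξ - 1) * c) : (r : ℤ) ∣ n := by
  have hc' : c ∈ Algebra.adjoin ℤ ({ξ} : Set ℂ) := by
    rw [Algebra.adjoin_int]; exact hc
  rw [Algebra.adjoin_singleton_eq_range_aeval] at hc'
  obtain ⟨P, hP⟩ := hc'
  have hP' : aeval ξ P = c := hP
  set Q : ℤ[X] := C n - (X - 1) * P with hQ
  have haQ : aeval ξ Q = 0 := by
    simp [hQ, hP', h]
  have hr0 : 0 < r := hrp.pos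
  have hmin : cyclotomic r ℚ = minpoly ℚ ξ := cyclotomic_eq_minpoly_rat hξ hr0
  have hdvdQ : cyclotomic r ℚ ∣ Q.map (Int.castRingHom ℚ) := by
    rw [hmin]
    apply minpoly.dvd
    rw [show ((Int.castRingHom ℚ) : ℤ →+* ℚ) = algebraMap ℤ ℚ from rfl,
      Polynomial.aeval_map_algebraMap]
    exact haQ
  rw [← map_cyclotomic r (Int.castRingHom ℚ)] at hdvdQ
  rw [Polynomial.map_dvd_map (Int.castRingHom ℚ) Int.cast_injective (cyclotomic.monic r ℤ)] at hdvdQ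
  obtain ⟨H, hH⟩ := hdvdQ
  have := congrArg (Polynomial.eval 1) hH
  have hfact : Fact r.Prime := ⟨hrp⟩
  simp [hQ, eval_one_cyclotomic_prime] at this
  exact ⟨H.eval 1, this⟩

open Polynomial in
lemma aux_r_eq_pow_mul {r : ℕ} (hrp : r.Prime) {ξ : ℂ} (hξ : IsPrimitiveRoot ξ r) :
    ∃ c ∈ Subring.closure ({ξ} : Set ℂ), ((r : ℕ) : ℂ) = (ξ - 1) ^ (r - 1) * c := by
  have hfact : Fact r.Prime := ⟨hrp⟩
  have hne : NeZero r := ⟨hrp.ne_zero⟩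
  have hxi : ξ ∈ Subring.closure ({ξ} : Set ℂ) := Subring.subset_closure rfl
  have hcy : cyclotomic r ℂ = ∏ μ ∈ primitiveRoots r ℂ, (X - C μ) :=
    cyclotomic_eq_prod_X_sub_primitiveRoots hξ
  have heval : ((r : ℕ) : ℂ) = ∏ μ ∈ primitiveRoots r ℂ, (1 - μ) := by
    have := congrArg (Polynomial.eval 1) hcy
    rw [eval_one_cyclotomic_prime, Polynomial.eval_prod] at this
    simpa using this
  have hcard : (primitiveRoots r ℂ).card = r - 1 := by
    rw [hξ.card_primitiveRoots, Nat.totient_prime hrp]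
  have hfac : ∀ μ ∈ primitiveRoots r ℂ, ∃ d ∈ Subring.closure ({ξ} : Set ℂ),
      1 - μ = (ξ - 1) * d := by
    intro μ hμ
    have hμr : μ ^ r = 1 := ((mem_primitiveRoots hrp.pos).1 hμ).pow_eq_one
    obtain ⟨i, _, rfl⟩ := hξ.eq_pow_of_pow_eq_one hμr
    have hmem : (-(∑ j ∈ Finset.range i, ξ ^ j)) ∈ Subring.closure ({ξ} : Set ℂ) :=
      Subring.neg_mem _ (Subring.sum_mem _ fun j _ => Subring.pow_mem _ hxi j)
    refine ⟨-(∑ j ∈ Finset.range i, ξ ^ j), hmem, ?_⟩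
    have hg := geom_sum_mul ξ i
    calc 1 - ξ ^ i = -((∑ j ∈ Finset.range i, ξ ^ j) * (ξ - 1)) := by rw [hg]; ring
      _ = (ξ - 1) * -(∑ j ∈ Finset.range i, ξ ^ j) := by ring
  choose d hd hd2 using hfac
  refine ⟨∏ μ ∈ (primitiveRoots r ℂ).attach, d μ.1 μ.2, ?_, ?_⟩
  · exact Subring.prod_mem _ fun μ _ => hd μ.1 μ.2
  · rw [heval, ← Finset.prod_attach (primitiveRoots r ℂ) (fun μ => 1 - μ)]
    rw [Finset.prod_congr rfl (fun μ _ => hd2 μ.1 μ.2), Finset.prod_mul_distrib,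
      Finset.prod_const, Finset.card_attach, hcard]

lemma aux_exists_int_near {ξ : ℂ} (hξ : ξ ∈ Subring.closure ({ξ} : Set ℂ)) :
    ∀ x ∈ Subring.closure ({ξ} : Set ℂ), ∃ n : ℤ, ∃ c ∈ Subring.closure ({ξ} : Set ℂ),
      x - n = (ξ - 1) * c := by
  intro x hx
  induction hx using Subring.closure_induction with
  | mem y hy =>
    rcases hy with rfl
    exact ⟨1, 1, Subring.one_mem _, by push_cast; ring⟩
  | zero => exact ⟨0, 0, Subring.zero_mem _, by push_cast; ring⟩
  | one => exact ⟨1, 0, Subring.zero_mem _, by push_cast; ring⟩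
  | add a b ha hb iha ihb =>
    obtain ⟨n1, c1, hc1, h1⟩ := iha
    obtain ⟨n2, c2, hc2, h2⟩ := ihb
    exact ⟨n1 + n2, c1 + c2, Subring.add_mem _ hc1 hc2, by push_cast; linear_combination h1 + h2⟩
  | neg a ha iha =>
    obtain ⟨n1, c1, hc1, h1⟩ := iha
    exact ⟨-n1, -c1, Subring.neg_mem _ hc1, by push_cast; linear_combination -h1⟩
  | mul a b ha hb iha ihb =>
    obtain ⟨n1, c1, hc1, h1⟩ := iha
    obtain ⟨n2, c2, hc2, h2⟩ := ihb
    refine ⟨n1 * n2, c1 * b + (n1 : ℂ) * c2, ?_, ?_⟩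
    · exact Subring.add_mem _ (Subring.mul_mem _ hc1 hb)
        (Subring.mul_mem _ (intCast_mem _ n1) hc2)
    · push_cast
      linear_combination b * h1 + (n1 : ℂ) * h2

/-- divisibility in the subring vs ℂ-level witness -/
lemma aux_dvd_closure_iff {ξ : ℂ} (x y : Subring.closure ({ξ} : Set ℂ)) :
    x ∣ y ↔ ∃ c ∈ Subring.closure ({ξ} : Set ℂ), (y : ℂ) = (x : ℂ) * c := by
  constructor
  · rintro ⟨c, rfl⟩
    exact ⟨c, c.2, by push_cast; ring⟩
  · rintro ⟨c, hc, h⟩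
    exact ⟨⟨c, hc⟩, Subtype.ext (by push_cast; exact h)⟩

lemma aux_prime_sub_one {ξ : ℂ} {r : ℕ} (hrp : r.Prime) (hξ : IsPrimitiveRoot ξ r)
    (hrpow : ∃ c ∈ Subring.closure ({ξ} : Set ℂ), ((r : ℕ) : ℂ) = (ξ - 1) ^ (r - 1) * c) :
    Prime ((⟨ξ, Subring.subset_closure rfl⟩ - 1 : Subring.closure ({ξ} : Set ℂ))) := by
  set R := Subring.closure ({ξ} : Set ℂ) with hR
  have hxi : ξ ∈ R := Subring.subset_closure rfl
  have hxim : ξ - 1 ∈ R := Subring.sub_mem _ hxi (Subring.one_mem _)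
  set z : R := ⟨ξ, Subring.subset_closure rfl⟩ with hz
  have hr2 : 2 ≤ r := hrp.two_le
  have hzc : ((z - 1 : R) : ℂ) = ξ - 1 := by push_cast; ring
  have hrdvd : (z - 1) ∣ ((r : ℕ) : R) := by
    obtain ⟨c, hcmem, hc⟩ := hrpow
    rw [aux_dvd_closure_iff]
    refine ⟨(ξ - 1) ^ (r - 2) * c, ?_, ?_⟩
    · exact Subring.mul_mem _ (Subring.pow_mem _ hxim _) hcmem
    · push_cast
      rw [hc, show r - 1 = 1 + (r - 2) by omega]
      ring
  have hint : ∀ n : ℤ, (z - 1) ∣ ((n : ℤ) : R) → (r : ℤ) ∣ n := by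
    intro n hdvd
    rw [aux_dvd_closure_iff] at hdvd
    obtain ⟨c, hcm, hcc⟩ := hdvd
    refine aux_int_dvd hrp hξ n c hcm ?_
    rw [hzc] at hcc
    exact_mod_cast hcc
  have hintback : ∀ n : ℤ, (r : ℤ) ∣ n → (z - 1) ∣ ((n : ℤ) : R) := by
    rintro n ⟨m, rfl⟩
    push_cast
    exact Dvd.dvd.mul_right (by exact_mod_cast hrdvd) _
  constructor
  · intro h0
    have h1 : ξ - 1 = 0 := by rw [← hzc, h0]; push_cast; ring
    have h2 : ξ = 1 := by linear_combination h1
    exact (hξ.ne_one hr2) h2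
  constructor
  · rintro hu
    obtain ⟨u, hu'⟩ := hu.exists_right_inv
    have h1 : (z - 1) ∣ ((1 : ℤ) : R) := by
      rw [Int.cast_one]
      exact ⟨u, hu'.symm⟩
    have h2 := hint 1 h1
    have := Int.le_of_dvd one_pos h2
    have := hrp.two_le
    omega
  · intro a b hab
    obtain ⟨na, ca, hcam, hca⟩ := aux_exists_int_near hxi (a : ℂ) a.2
    obtain ⟨nb, cb, hcbm, hcb⟩ := aux_exists_int_near hxi (b : ℂ) b.2
    have hda : (z - 1) ∣ a - (na : R) := by
      rw [aux_dvd_closure_iff]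
      exact ⟨ca, hcam, by push_cast; linear_combination hca⟩
    have hdb : (z - 1) ∣ b - (nb : R) := by
      rw [aux_dvd_closure_iff]
      exact ⟨cb, hcbm, by push_cast; linear_combination hcb⟩
    have hdnab : (z - 1) ∣ ((na * nb : ℤ) : R) := by
      have : ((na * nb : ℤ) : R) = a * b - a * (b - (nb : R)) - ((nb : ℤ) : R) * (a - (na : R)) := by
        push_cast; ring
      rw [this]
      exact dvd_sub (dvd_sub hab (Dvd.dvd.mul_left hdb a)) (Dvd.dvd.mul_left hda _)
    have hr : (r : ℤ) ∣ na * nb := hint _ hdnab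
    rcases (Int.Prime.dvd_mul' (by exact_mod_cast hrp) hr) with h | h
    · left
      have h2 : (z - 1) ∣ (a - ((na : ℤ) : R)) + ((na : ℤ) : R) := dvd_add hda (hintback na h)
      simpa using h2
    · right
      have h2 : (z - 1) ∣ (b - ((nb : ℤ) : R)) + ((nb : ℤ) : R) := dvd_add hdb (hintback nb h)
      simpa using h2

lemma aux_conj_xi {ξ : ℂ} {r : ℕ} (hξ : IsPrimitiveRoot ξ r) (hr : r ≠ 0) :
    (starRingEnd ℂ) ξ = ξ ^ (r - 1) := by
  have h1 : ‖ξ‖ = 1 := hξ.norm'_eq_one hr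
  have h2 : ξ⁻¹ = (starRingEnd ℂ) ξ := Complex.inv_eq_conj h1
  rw [← h2]
  have hξ0 : ξ ≠ 0 := hξ.ne_zero hr
  field_simp
  rw [← pow_succ', show r - 1 + 1 = r by omega]
  exact hξ.pow_eq_one.symm

lemma aux_conj_mem_closure {ξ : ℂ} {r : ℕ} (hξ : IsPrimitiveRoot ξ r) (hr : r ≠ 0) :
    ∀ x ∈ Subring.closure ({ξ} : Set ℂ), (starRingEnd ℂ) x ∈ Subring.closure ({ξ} : Set ℂ) := by
  have hxi : ξ ∈ Subring.closure ({ξ} : Set ℂ) := Subring.subset_closure rfl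
  intro x hx
  induction hx using Subring.closure_induction with
  | mem y hy =>
    rcases hy with rfl
    rw [aux_conj_xi hξ hr]
    exact Subring.pow_mem _ hxi _
  | zero => simpa using Subring.zero_mem _
  | one => simpa using Subring.one_mem _
  | add a b _ _ iha ihb => rw [map_add]; exact Subring.add_mem _ iha ihb
  | neg a _ iha => rw [map_neg]; exact Subring.neg_mem _ iha
  | mul a b _ _ iha ihb => rw [map_mul]; exact Subring.mul_mem _ iha ihb

/-- transfer of `(z-1)^n` divisibility through complex conjugation -/
lemma aux_dvd_conj_of_dvd {ξ : ℂ} {r : ℕ} (hξ : IsPrimitiveRoot ξ r) (hr : r ≠ 0)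
    (n : ℕ) (S S' : Subring.closure ({ξ} : Set ℂ))
    (hconj : (S' : ℂ) = (starRingEnd ℂ) (S : ℂ))
    (z : Subring.closure ({ξ} : Set ℂ)) (hzv : (z : ℂ) = ξ)
    (h : (z - 1) ^ n ∣ S) : (z - 1) ^ n ∣ S' := by
  have hxi : ξ ∈ Subring.closure ({ξ} : Set ℂ) := Subring.subset_closure rfl
  obtain ⟨t, ht⟩ := h
  have htc : (S : ℂ) = (ξ - 1) ^ n * t := by
    have := congrArg (Subtype.val) ht
    push_cast at this
    rw [hzv] at this
    exact_mod_cast this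
  set g : ℂ := ∑ j ∈ Finset.range (r - 1), ξ ^ j with hg
  have hgmem : g ∈ Subring.closure ({ξ} : Set ℂ) :=
    Subring.sum_mem _ fun j _ => Subring.pow_mem _ hxi j
  have hgeq : (starRingEnd ℂ) (ξ - 1) = (ξ - 1) * g := by
    rw [map_sub, map_one, aux_conj_xi hξ hr]
    have := geom_sum_mul ξ (r - 1)
    rw [hg, ← this]
    ring
  have hS' : (S' : ℂ) = (ξ - 1) ^ n * (g ^ n * (starRingEnd ℂ) t) := by
    rw [hconj, htc, map_mul, map_pow, hgeq, mul_pow]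
    ring
  have hmem : (g ^ n * (starRingEnd ℂ) t) ∈ Subring.closure ({ξ} : Set ℂ) :=
    Subring.mul_mem _ (Subring.pow_mem _ hgmem _) (aux_conj_mem_closure hξ hr t t.2)
  refine ⟨⟨g ^ n * (starRingEnd ℂ) t, hmem⟩, ?_⟩
  apply Subtype.ext
  push_cast
  rw [hS', hzv]

lemma aux_sum_zmod_val {r : ℕ} [NeZero r] (f : ℕ → ℂ) :
    ∑ t : ZMod r, f t.val = ∑ j ∈ Finset.range r, f j := by
  refine Finset.sum_nbij' (fun t => t.val) (fun j => (j : ZMod r)) ?_ ?_ ?_ ?_ ?_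
  · intro t _; exact Finset.mem_range.2 (ZMod.val_lt t)
  · intro j _; exact Finset.mem_univ _
  · intro t _; exact ZMod.natCast_rightInverse t
  · intro j hj; exact ZMod.val_cast_of_lt (Finset.mem_range.1 hj)
  · intro t _; rfl

lemma aux_geom_sum_char {r : ℕ} {x : ℂ} (hx : x ^ r = 1) (hx1 : x ≠ 1) :
    ∑ j ∈ Finset.range r, x ^ j = 0 := by
  have h := geom_sum_mul x r
  rw [hx, sub_self] at h
  rcases mul_eq_zero.1 h with h | h
  · exact h
  · exact absurd (by linear_combination h) hx1

section chi
variable {ξ : ℂ} {r : ℕ} (hξ : IsPrimitiveRoot ξ r) [NeZero r]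

/-- character on ZMod r -/
noncomputable def chi (ξ : ℂ) {r : ℕ} (t : ZMod r) : ℂ := ξ ^ t.val

include hξ

lemma chi_int (n : ℤ) : ξ ^ n = chi ξ ((n : ZMod r)) := by
  have hrpos : 0 < r := NeZero.pos r
  have hξ0 : ξ ≠ 0 := hξ.ne_zero hrpos.ne'
  have hval : (((n : ZMod r)).val : ℤ) = n % r := ZMod.val_intCast n
  have h : ξ ^ (n : ℤ) = ξ ^ ((n % r) + r * (n / r) : ℤ) := by
    rw [Int.emod_add_mul_ediv]
  rw [h, zpow_add₀ hξ0, zpow_mul, show ((r:ℤ)) = ((r:ℕ):ℤ) from rfl, zpow_natCast,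
    hξ.pow_eq_one, one_zpow, mul_one, ← hval, zpow_natCast]
  rfl

lemma chi_add (s t : ZMod r) : chi ξ (s + t) = chi ξ s * chi ξ t := by
  have h1 : chi ξ s = ξ ^ ((s.val : ℤ)) := by rw [zpow_natCast]; rfl
  have h2 : chi ξ t = ξ ^ ((t.val : ℤ)) := by rw [zpow_natCast]; rfl
  have h3 : s + t = (((s.val : ℤ) + (t.val : ℤ) : ℤ) : ZMod r) := by
    push_cast
    rw [ZMod.natCast_val, ZMod.natCast_val, ZMod.cast_id, ZMod.cast_id]
  rw [h3, ← chi_int hξ, zpow_add₀ (hξ.ne_zero (NeZero.pos r).ne'), h1, h2]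

lemma chi_mul_nat (c t : ZMod r) : chi ξ (c * t) = (chi ξ c) ^ t.val := by
  have h3 : c * t = (((c.val : ℤ) * (t.val : ℤ) : ℤ) : ZMod r) := by
    push_cast
    rw [ZMod.natCast_val, ZMod.natCast_val, ZMod.cast_id, ZMod.cast_id]
  rw [h3, ← chi_int hξ, zpow_mul, zpow_natCast, zpow_natCast]
  rfl

lemma chi_sum {ι : Type*} (s : Finset ι) (f : ι → ZMod r) :
    chi ξ (∑ i ∈ s, f i) = ∏ i ∈ s, chi ξ (f i) := by
  classical
  induction s using Finset.induction with
  | empty => simp [chi]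
  | insert _ _ hx ih =>
    rw [Finset.sum_insert hx, Finset.prod_insert hx, chi_add hξ, ih]

lemma chi_orth (c : ZMod r) :
    ∑ t : ZMod r, chi ξ (c * t) = if c = 0 then (r : ℂ) else 0 := by
  have hrpos : 0 < r := NeZero.pos r
  by_cases hc : c = 0
  · simp [hc, chi, Finset.card_univ]
  · simp only [hc, if_false]
    have hne1 : chi ξ c ≠ 1 := by
      intro h
      have hdvd : r ∣ c.val := (hξ.pow_eq_one_iff_dvd c.val).1 h
      have hlt : c.val < r := ZMod.val_lt c
      have hv0 : c.val = 0 := Nat.eq_zero_of_dvd_of_lt hdvd hlt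
      exact hc ((ZMod.val_eq_zero c).1 hv0)
    calc ∑ t : ZMod r, chi ξ (c * t) = ∑ t : ZMod r, (chi ξ c) ^ t.val := by
          exact Finset.sum_congr rfl fun t _ => chi_mul_nat hξ c t
      _ = ∑ j ∈ Finset.range r, (chi ξ c) ^ j := aux_sum_zmod_val _
      _ = 0 := aux_geom_sum_char
          (by rw [chi, ← pow_mul, mul_comm, pow_mul, hξ.pow_eq_one, one_pow]) hne1

lemma chi_conj (t : ZMod r) : (starRingEnd ℂ) (chi ξ t) = chi ξ (-t) := by
  have hrpos : 0 < r := NeZero.pos r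
  have hξ0 : ξ ≠ 0 := hξ.ne_zero hrpos.ne'
  have h1 : chi ξ t = ξ ^ ((t.val : ℤ)) := by rw [zpow_natCast]; rfl
  have h2 : -t = ((-(t.val : ℤ) : ℤ) : ZMod r) := by
    push_cast
    rw [ZMod.natCast_val, ZMod.cast_id]
  rw [h2, ← chi_int hξ, h1, map_zpow₀, ← Complex.inv_eq_conj (hξ.norm'_eq_one hrpos.ne'),
    inv_zpow, zpow_neg]

omit hξ [NeZero r] in
lemma chi_mem (t : ZMod r) : chi ξ t ∈ Subring.closure ({ξ} : Set ℂ) := by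
  have hxi : ξ ∈ Subring.closure ({ξ} : Set ℂ) := Subring.subset_closure rfl
  exact Subring.pow_mem _ hxi _

end chi

/-- for every integer `b` and every `β ∈ ℤ^ℓ`, the shifted Gauss sum
`∑_{k ∈ {0,…,r−1}^ℓ} ξ^{b(B(ρ+k,ρ+k) − B(ρ,ρ))/2 + B(ρ+k, β)}` is divisible by
`(ξ−1)^{ℓ(r−1)/2}` in `ℤ[ξ]`. -/
theorem stmt2 (l r : ℕ) (hl : 0 < l) (hrp : Nat.Prime r) (hodd : Odd r)
    (B : (Fin l → ℚ) →ₗ[ℚ] (Fin l → ℚ) →ₗ[ℚ] ℚ)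
    (hBsymm : ∀ x y, B x y = B y x)
    (hBint : ∀ x y : Fin l → ℤ, ∃ n : ℤ, (n : ℚ) = B (intVecQ x) (intVecQ y))
    (hBeven : ∀ y : Fin l → ℤ, ∃ n : ℤ, ((2 * n : ℤ) : ℚ) = B (intVecQ y) (intVecQ y))
    (ρ : Fin l → ℚ)
    (hρ : ∀ y : Fin l → ℤ, ∃ n : ℤ, (n : ℚ) = B ρ (intVecQ y))
    (dP : ℤ)
    (hdP : (dP : ℚ) = (Matrix.of fun i j : Fin l => B (Pi.single i 1) (Pi.single j 1)).det)
    (hcop : IsCoprime (r : ℤ) dP)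
    (ξ : ℂ) (hξ : IsPrimitiveRoot ξ r)
    (b : ℤ) (β : Fin l → ℤ)
    (e : (Fin l → Fin r) → ℤ)
    (he : ∀ k : Fin l → Fin r, ((e k : ℤ) : ℚ) =
      (b : ℚ) * (B (ρ + finVecQ k) (ρ + finVecQ k) - B ρ ρ) / 2
        + B (ρ + finVecQ k) (intVecQ β)) :
    ∃ cc ∈ Subring.closure ({ξ} : Set ℂ),
      ∑ k : Fin l → Fin r, ξ ^ (e k) = (ξ - 1) ^ (l * (r - 1) / 2) * cc := by
  classical
  have hrpos : 0 < r := hrp.pos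
  haveI : NeZero r := ⟨hrp.ne_zero⟩
  have hr2 : 2 ≤ r := hrp.two_le
  have hξ0 : ξ ≠ 0 := hξ.ne_zero hrpos.ne'
  have hxi : ξ ∈ Subring.closure ({ξ} : Set ℂ) := Subring.subset_closure rfl
  set R : Subring ℂ := Subring.closure ({ξ} : Set ℂ) with hR
  set z : R := ⟨ξ, hxi⟩ with hzdef
  have hzv : (z : ℂ) = ξ := rfl
  have hz1 : ((z - 1 : R) : ℂ) = ξ - 1 := by push_cast; ring
  -- the rational exponent function
  set Qf : (Fin l → ℤ) → ℚ := fun x =>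
    (b : ℚ) * (B (ρ + intVecQ x) (ρ + intVecQ x) - B ρ ρ) / 2 + B (ρ + intVecQ x) (intVecQ β)
    with hQf
  have hIVadd : ∀ x u : Fin l → ℤ, intVecQ (x + u) = intVecQ x + intVecQ u := by
    intro x u; funext i; simp [intVecQ]
  -- integrality of Qf
  have hQint : ∀ x : Fin l → ℤ, ∃ n : ℤ, (n : ℚ) = Qf x := by
    intro x
    obtain ⟨n1, hn1⟩ := hBeven x
    obtain ⟨n2, hn2⟩ := hρ x
    obtain ⟨n3, hn3⟩ := hρ β
    obtain ⟨n4, hn4⟩ := hBint x β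
    refine ⟨b * (n1 + n2) + n3 + n4, ?_⟩
    simp only [hQf, map_add, LinearMap.add_apply]
    rw [hBsymm (intVecQ x) ρ]
    push_cast at hn1 ⊢
    linear_combination ((b : ℚ)/2) * hn1 + (b : ℚ) * hn2 + hn3 + hn4
  -- the additive expansion of Qf
  have hQdiff : ∀ x u : Fin l → ℤ, Qf (x + u) = Qf x + (b : ℚ) * B (intVecQ u) (intVecQ x)
      + ((b : ℚ) * B (intVecQ u) (intVecQ u) / 2 + (b : ℚ) * B ρ (intVecQ u)
        + B (intVecQ u) (intVecQ β)) := by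
    intro x u
    simp only [hQf, hIVadd, map_add, LinearMap.add_apply]
    rw [hBsymm (intVecQ x) (intVecQ u), hBsymm (intVecQ x) ρ, hBsymm (intVecQ u) ρ]
    ring
  choose E hE using hQint
  have hEe : ∀ k : Fin l → Fin r, e k = E (fun i => ((k i : ℕ) : ℤ)) := by
    intro k
    have hfin : ρ + finVecQ k = ρ + intVecQ (fun i => ((k i : ℕ) : ℤ)) := by
      funext i; simp [finVecQ, intVecQ]
    have h1 : (e k : ℚ) = Qf (fun i => ((k i : ℕ) : ℤ)) := by
      rw [he k, hfin, hQf]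
    have h2 := hE (fun i => ((k i : ℕ) : ℤ))
    exact_mod_cast h1.trans h2.symm
  choose dd hdd using hBint
  have hcEex : ∀ u : Fin l → ℤ, ∃ n : ℤ, (n : ℚ) =
      (b : ℚ) * B (intVecQ u) (intVecQ u) / 2 + (b : ℚ) * B ρ (intVecQ u)
        + B (intVecQ u) (intVecQ β) := by
    intro u
    obtain ⟨n1, hn1⟩ := hBeven u
    obtain ⟨n2, hn2⟩ := hρ u
    refine ⟨b * n1 + b * n2 + dd u β, ?_⟩
    push_cast at hn1 ⊢
    linear_combination ((b : ℚ)/2) * hn1 + (b : ℚ) * hn2 + hdd u β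
  choose cE hcE using hcEex
  have hEadd : ∀ x u : Fin l → ℤ, E (x + u) = E x + b * dd u x + cE u := by
    intro x u
    have hcast : ((E (x + u) : ℤ) : ℚ) = ((E x + b * dd u x + cE u : ℤ) : ℚ) := by
      push_cast
      linear_combination hE (x + u) + hQdiff x u - hE x - (b : ℚ) * hdd u x - hcE u
    exact_mod_cast hcast
  -- reduction of E modulo r
  have hEmod : ∀ x u : Fin l → ℤ,
      ((E (x + fun i => (r : ℤ) * u i) : ℤ) : ZMod r) = ((E x : ℤ) : ZMod r) := by
    intro x u
    obtain ⟨n1, hn1⟩ := hBeven u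
    obtain ⟨n2, hn2⟩ := hρ u
    have hsm : intVecQ (fun i => (r : ℤ) * u i) = (r : ℚ) • intVecQ u := by
      funext i; simp [intVecQ]
    have hkey : E (x + fun i => (r : ℤ) * u i)
        = E x + r * (b * dd u x + b * r * n1 + b * n2 + dd u β) := by
      have hcast : ((E (x + fun i => (r : ℤ) * u i) : ℤ) : ℚ)
          = ((E x + r * (b * dd u x + b * r * n1 + b * n2 + dd u β) : ℤ) : ℚ) := by
        rw [hE, hQdiff x _, hsm]
        simp only [map_smul, LinearMap.smul_apply, smul_eq_mul]
        push_cast at hn1 ⊢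
        rw [hE]
        linear_combination (-((b : ℚ) * r * r) / 2) * hn1 + (-((b : ℚ) * r)) * hn2
          + (-((b : ℚ) * r)) * hdd u x + (-(r : ℚ)) * hdd u β
      exact_mod_cast hcast
    rw [hkey]
    push_cast
    rw [ZMod.natCast_self]
    ring
  -- the linear decomposition of dd
  have hsingle : ∀ i : Fin l, intVecQ (Pi.single i (1 : ℤ)) = Pi.single i (1 : ℚ) := by
    intro i; funext j; simp [intVecQ, Pi.single_apply]
  have hddlin : ∀ u x : Fin l → ℤ, dd u x = ∑ i, x i * dd u (Pi.single i (1 : ℤ)) := by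
    intro u x
    have hx : intVecQ x = ∑ i, (x i : ℚ) • intVecQ (Pi.single i (1 : ℤ)) := by
      funext j
      rw [Finset.sum_apply]
      simp only [hsingle, Pi.smul_apply, Pi.single_apply, smul_eq_mul, mul_ite, mul_one, mul_zero]
      simp [intVecQ]
    have hcast : ((dd u x : ℤ) : ℚ) = ((∑ i, x i * dd u (Pi.single i (1 : ℤ)) : ℤ) : ℚ) := by
      rw [hdd u x, hx, map_sum]
      push_cast
      refine Finset.sum_congr rfl fun i _ => ?_
      rw [map_smul, smul_eq_mul, hdd u (Pi.single i (1 : ℤ))]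
    exact_mod_cast hcast
  -- pass to ZMod r exponents
  set repZ : (Fin l → ZMod r) → (Fin l → ℤ) := fun g i => ((g i).val : ℤ) with hrepZ
  set ε : (Fin l → ZMod r) → ZMod r := fun g => ((E (repZ g) : ℤ) : ZMod r) with hε
  set S : ℂ := ∑ g : Fin l → ZMod r, chi ξ (ε g) with hS
  set S' : ℂ := ∑ g : Fin l → ZMod r, chi ξ (-ε g) with hS'
  have hrepval : ∀ (g : Fin l → ZMod r) (i : Fin l), ((repZ g i : ℤ) : ZMod r) = g i := by
    intro g i
    simp only [hrepZ]
    push_cast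
    rw [ZMod.natCast_val, ZMod.cast_id]
  -- the original sum equals S
  have hSsum : ∑ k : Fin l → Fin r, ξ ^ (e k) = S := by
    rw [hS]
    refine Finset.sum_nbij' (fun k => fun i => ((k i : ℕ) : ZMod r))
      (fun g => fun i => (⟨(g i).val, ZMod.val_lt (g i)⟩ : Fin r)) ?_ ?_ ?_ ?_ ?_
    · intro k _; exact Finset.mem_univ _
    · intro g _; exact Finset.mem_univ _
    · intro k _
      funext i
      apply Fin.ext
      exact ZMod.val_cast_of_lt (k i).isLt
    · intro g _
      funext i
      show (((g i).val : ℕ) : ZMod r) = g i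
      exact ZMod.natCast_rightInverse (g i)
    · intro k _
      have hrep : repZ (fun i => ((k i : ℕ) : ZMod r)) = fun i => ((k i : ℕ) : ℤ) := by
        funext i
        show ((ZMod.val (((k i : ℕ) : ZMod r)) : ℕ) : ℤ) = ((k i : ℕ) : ℤ)
        rw [ZMod.val_cast_of_lt (k i).isLt]
      rw [hEe k, chi_int hξ]
      have hεv : ε (fun i => ((k i : ℕ) : ZMod r)) = ((E (fun i => ((k i : ℕ) : ℤ)) : ℤ) : ZMod r) := by
        simp only [hε]
        rw [hrep]
      rw [hεv]
  -- decompose differences of ε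
  have hrepadd : ∀ h m : Fin l → ZMod r, ∃ u : Fin l → ℤ,
      repZ h + repZ m = (repZ (h + m)) + fun i => (r : ℤ) * u i := by
    intro h m
    refine ⟨fun i => ((((h i).val + (m i).val) / r : ℕ) : ℤ), ?_⟩
    funext i
    simp only [Pi.add_apply, hrepZ]
    have hv : (h i + m i).val = ((h i).val + (m i).val) % r := ZMod.val_add (h i) (m i)
    rw [hv]
    have hn : (((h i).val + (m i).val) % r) + r * (((h i).val + (m i).val) / r)
        = (h i).val + (m i).val := Nat.mod_add_div _ _
    exact_mod_cast hn.symm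
  have hεdiff : ∀ h m : Fin l → ZMod r,
      ε (h + m) - ε h = ((b * dd (repZ m) (repZ h) + cE (repZ m) : ℤ) : ZMod r) := by
    intro h m
    obtain ⟨u, hu⟩ := hrepadd h m
    have h1 : ε (h + m) = ((E (repZ h + repZ m) : ℤ) : ZMod r) := by
      rw [hu, hEmod (repZ (h + m)) u, hε]
    rw [h1, hEadd (repZ h) (repZ m), hε]
    push_cast
    ring
  -- the inner character sums
  have hinner : ∀ m : Fin l → ZMod r, ∃ c ∈ R,
      (∑ h : Fin l → ZMod r, chi ξ (ε (h + m) - ε h)) = ((r : ℕ) : ℂ) ^ l * c := by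
    intro m
    set ci : Fin l → ZMod r :=
      fun i => ((b : ℤ) : ZMod r) * ((dd (repZ m) (Pi.single i (1 : ℤ)) : ℤ) : ZMod r) with hci
    have hterm : ∀ h : Fin l → ZMod r, chi ξ (ε (h + m) - ε h)
        = chi ξ ((cE (repZ m) : ℤ) : ZMod r) * ∏ i, chi ξ (ci i * h i) := by
      intro h
      rw [hεdiff h m, hddlin (repZ m) (repZ h)]
      have hsplit : ((b * (∑ i, repZ h i * dd (repZ m) (Pi.single i (1 : ℤ))) + cE (repZ m) : ℤ)
          : ZMod r) = ((cE (repZ m) : ℤ) : ZMod r) + ∑ i, ci i * h i := by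
        push_cast
        rw [Finset.mul_sum]
        rw [add_comm]
        congr 1
        refine Finset.sum_congr rfl fun i _ => ?_
        rw [hci]
        rw [← hrepval h i]
        push_cast
        ring
      rw [hsplit, chi_add hξ, chi_sum hξ]
    have hfactor : (∑ h : Fin l → ZMod r, ∏ i, chi ξ (ci i * h i))
        = ∏ i, ∑ t : ZMod r, chi ξ (ci i * t) := by
      rw [Finset.prod_univ_sum]
      rfl
    by_cases hall : ∀ i, ci i = 0
    · refine ⟨chi ξ ((cE (repZ m) : ℤ) : ZMod r), chi_mem _, ?_⟩
      calc (∑ h : Fin l → ZMod r, chi ξ (ε (h + m) - ε h))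
          = ∑ h : Fin l → ZMod r, chi ξ ((cE (repZ m) : ℤ) : ZMod r) * ∏ i, chi ξ (ci i * h i) :=
            Finset.sum_congr rfl fun h _ => hterm h
        _ = chi ξ ((cE (repZ m) : ℤ) : ZMod r) * ∑ h : Fin l → ZMod r, ∏ i, chi ξ (ci i * h i) :=
            (Finset.mul_sum _ _ _).symm
        _ = chi ξ ((cE (repZ m) : ℤ) : ZMod r) * ∏ i : Fin l, ∑ t : ZMod r, chi ξ (ci i * t) := by
            rw [hfactor]
        _ = ((r : ℕ) : ℂ) ^ l * chi ξ ((cE (repZ m) : ℤ) : ZMod r) := by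
            rw [Finset.prod_congr rfl fun i _ => chi_orth hξ (ci i)]
            simp [hall]
            ring
    · push_neg at hall
      obtain ⟨i0, hi0⟩ := hall
      refine ⟨0, Subring.zero_mem _, ?_⟩
      rw [mul_zero]
      calc (∑ h : Fin l → ZMod r, chi ξ (ε (h + m) - ε h))
          = ∑ h : Fin l → ZMod r, chi ξ ((cE (repZ m) : ℤ) : ZMod r) * ∏ i, chi ξ (ci i * h i) :=
            Finset.sum_congr rfl fun h _ => hterm h
        _ = chi ξ ((cE (repZ m) : ℤ) : ZMod r) * ∑ h : Fin l → ZMod r, ∏ i, chi ξ (ci i * h i) :=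
            (Finset.mul_sum _ _ _).symm
        _ = chi ξ ((cE (repZ m) : ℤ) : ZMod r) * ∏ i : Fin l, ∑ t : ZMod r, chi ξ (ci i * t) := by
            rw [hfactor]
        _ = 0 := by
            rw [Finset.prod_eq_zero (Finset.mem_univ i0)
              (by rw [chi_orth hξ (ci i0)]; simp [hi0])]
            ring
  choose cf hcfmem hcfval using hinner
  -- the product formula
  have hSS' : S * S' = ((r : ℕ) : ℂ) ^ l * ∑ m : Fin l → ZMod r, cf m := by
    calc S * S' = ∑ g : Fin l → ZMod r, ∑ h : Fin l → ZMod r, chi ξ (ε g) * chi ξ (-ε h) := by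
          rw [hS, hS', Finset.sum_mul_sum]
      _ = ∑ g : Fin l → ZMod r, ∑ h : Fin l → ZMod r, chi ξ (ε g - ε h) := by
          refine Finset.sum_congr rfl fun g _ => Finset.sum_congr rfl fun h _ => ?_
          rw [← chi_add hξ, sub_eq_add_neg]
      _ = ∑ h : Fin l → ZMod r, ∑ g : Fin l → ZMod r, chi ξ (ε g - ε h) := Finset.sum_comm
      _ = ∑ h : Fin l → ZMod r, ∑ m : Fin l → ZMod r, chi ξ (ε (h + m) - ε h) := by
          refine Finset.sum_congr rfl fun h _ => ?_
          exact (Fintype.sum_equiv (Equiv.addLeft h)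
            (fun m => chi ξ (ε (h + m) - ε h)) (fun g => chi ξ (ε g - ε h))
            (fun m => rfl)).symm
      _ = ∑ m : Fin l → ZMod r, ∑ h : Fin l → ZMod r, chi ξ (ε (h + m) - ε h) := Finset.sum_comm
      _ = ∑ m : Fin l → ZMod r, ((r : ℕ) : ℂ) ^ l * cf m :=
          Finset.sum_congr rfl fun m _ => hcfval m
      _ = ((r : ℕ) : ℂ) ^ l * ∑ m : Fin l → ZMod r, cf m := by rw [Finset.mul_sum]
  -- memberships
  have hSmem : S ∈ R := Subring.sum_mem _ fun g _ => chi_mem _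
  have hS'mem : S' ∈ R := Subring.sum_mem _ fun g _ => chi_mem _
  have hCmem : (∑ m : Fin l → ZMod r, cf m) ∈ R := Subring.sum_mem _ fun m _ => hcfmem m
  set SR : R := ⟨S, hSmem⟩ with hSR
  set S'R : R := ⟨S', hS'mem⟩ with hS'R
  set CR : R := ⟨∑ m : Fin l → ZMod r, cf m, hCmem⟩ with hCR
  have hSS'R : SR * S'R = ((r : ℕ) : R) ^ l * CR := by
    apply Subtype.ext
    push_cast
    exact hSS'
  -- divisibility by (z-1)^(l*(r-1))
  obtain ⟨c0, hc0m, hc0⟩ := aux_r_eq_pow_mul hrp hξ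
  have hrR : ((r : ℕ) : R) = (z - 1) ^ (r - 1) * ⟨c0, hc0m⟩ := by
    apply Subtype.ext
    push_cast
    exact hc0
  have hdvd1 : (z - 1) ^ ((r - 1) * l) ∣ SR * S'R := by
    refine ⟨(⟨c0, hc0m⟩ : R) ^ l * CR, ?_⟩
    rw [hSS'R, hrR, mul_pow, pow_mul]
    ring
  have hdvd1' : (z - 1) ^ (l * (r - 1)) ∣ SR * S'R := by
    rw [Nat.mul_comm l (r - 1)]
    exact hdvd1
  have hNle : 2 * (l * (r - 1) / 2) ≤ l * (r - 1) := by
    have h1 := Nat.div_mul_le_self (l * (r - 1)) 2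
    omega
  have hdvd2 : (z - 1) ^ (2 * (l * (r - 1) / 2)) ∣ SR * S'R :=
    dvd_trans (pow_dvd_pow _ hNle) hdvd1'
  -- primality
  have hprime : Prime (z - 1) := aux_prime_sub_one hrp hξ ⟨c0, hc0m, hc0⟩
  -- conjugation symmetry
  have hconj1 : (S'R : ℂ) = (starRingEnd ℂ) (SR : ℂ) := by
    show S' = (starRingEnd ℂ) S
    rw [hS, hS', map_sum]
    exact Finset.sum_congr rfl fun g _ => (chi_conj hξ (ε g)).symm
  have hconj2 : (SR : ℂ) = (starRingEnd ℂ) (S'R : ℂ) := by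
    rw [hconj1, Complex.conj_conj]
  have hiff : ∀ n : ℕ, (z - 1) ^ n ∣ SR ↔ (z - 1) ^ n ∣ S'R := by
    intro n
    constructor
    · exact aux_dvd_conj_of_dvd hξ hrpos.ne' n SR S'R hconj1 z hzv
    · exact aux_dvd_conj_of_dvd hξ hrpos.ne' n S'R SR hconj2 z hzv
  have hfinal : (z - 1) ^ (l * (r - 1) / 2) ∣ SR :=
    aux_sq_dvd_half (z - 1) hprime.ne_zero (fun a b h => hprime.2.2 a b h)
      (l * (r - 1) / 2) SR S'R hiff hdvd2
  rw [aux_dvd_closure_iff] at hfinal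
  obtain ⟨c, hcm, hcval⟩ := hfinal
  refine ⟨c, hcm, ?_⟩
  rw [hSsum]
  have : ((((z - 1) ^ (l * (r - 1) / 2) : R)) : ℂ) = (ξ - 1) ^ (l * (r - 1) / 2) := by
    push_cast
    rfl
  rw [show S = (SR : ℂ) from rfl, hcval, this]
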